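/- Let (Γ, μ) be a finite measure space, S₀, S₁, c_m > 0, τ_ep, τ_res > 0, and let β : ℝ → ℝ be Lipschitz continuous. Then for all u₁, u₂, φ ∈ L⁴(μ) and w₁, w₂, ψ ∈ L²(μ), the real function s ↦ −(1/c_m)·∫_Γ (S₀ + S₁·(w₁ + s·w₂))·(u₁ + s·u₂)·φ dμ + ∫_Γ f(u₁ + s·u₂, w₁ + s·w₂)·ψ dμ is continuous on ℝ (hemicontinuity of the reaction part of the drift operator). -/

import Mathlib

open MeasureTheory
open scoped ENNReal

/-- The electroporation nonlinearity
`f(v,w) = max((β(v) − w)/τ_ep, (β(v) − w)/τ_res)`. -/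
noncomputable def epF (τep τres : ℝ) (β : ℝ → ℝ) (v w : ℝ) : ℝ :=
  max ((β v - w) / τep) ((β v - w) / τres)

set_option maxHeartbeats 2000000 in
/-- Hemicontinuity of the reaction part of the drift operator of the
electroporation system. -/
theorem reaction_hemicontinuity {Γ : Type*} [MeasurableSpace Γ]
    (μ : Measure Γ) [IsFiniteMeasure μ]
    (S₀ S₁ cm τep τres Lβ : ℝ)
    (hS₀ : 0 < S₀) (hS₁ : 0 < S₁) (hcm : 0 < cm)
    (hep : 0 < τep) (hres : 0 < τres)
    (β : ℝ → ℝ) (hβ : ∀ x y : ℝ, |β x - β y| ≤ Lβ * |x - y|)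
    (u₁ u₂ φ w₁ w₂ ψ : Γ → ℝ)
    (hu₁ : MemLp u₁ 4 μ) (hu₂ : MemLp u₂ 4 μ) (hφ : MemLp φ 4 μ)
    (hw₁ : MemLp w₁ 2 μ) (hw₂ : MemLp w₂ 2 μ) (hψ : MemLp ψ 2 μ) :
    Continuous (fun s : ℝ =>
      -(1 / cm) * ∫ x, (S₀ + S₁ * (w₁ x + s * w₂ x)) * (u₁ x + s * u₂ x) * φ x ∂μ
        + ∫ x, epF τep τres β (u₁ x + s * u₂ x) (w₁ x + s * w₂ x) * ψ x ∂μ) := by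
  -- basic facts about β
  have hLβ : 0 ≤ Lβ := by
    have h := hβ 1 0
    have h0 := abs_nonneg (β 1 - β 0)
    simp at h
    linarith
  have hβc : Continuous β := by
    have hl : LipschitzWith ⟨Lβ, hLβ⟩ β := by
      apply LipschitzWith.of_dist_le_mul
      intro x y
      simp only [Real.dist_eq]
      exact hβ x y
    exact hl.continuous
  have hepc : Continuous (fun p : ℝ × ℝ => epF τep τres β p.1 p.2) := by
    unfold epF
    exact (((hβc.comp continuous_fst).sub continuous_snd).div_const _).max
      (((hβc.comp continuous_fst).sub continuous_snd).div_const _)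
  set M : ℝ := max τep⁻¹ τres⁻¹ with hMdef
  have hM0 : 0 ≤ M := le_trans (inv_nonneg.mpr hep.le) (le_max_left _ _)
  have hepF_bound : ∀ v w : ℝ, |epF τep τres β v w| ≤ M * (|β 0| + Lβ * |v| + |w|) := by
    intro v w
    have h1 : |β v - β 0| ≤ Lβ * |v| := by simpa using hβ v 0
    have h2 : |β 0 - w| ≤ |β 0| + |w| := by
      have := abs_add_le (β 0) (-w); simpa [sub_eq_add_neg] using this
    have ht : |β v - w| ≤ |β 0| + Lβ * |v| + |w| := by
      calc |β v - w| = |(β v - β 0) + (β 0 - w)| := by ring_nf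
        _ ≤ |β v - β 0| + |β 0 - w| := abs_add_le _ _
        _ ≤ |β 0| + Lβ * |v| + |w| := by linarith
    have htn : (0:ℝ) ≤ |β 0| + Lβ * |v| + |w| := by positivity
    have hd : ∀ τ : ℝ, 0 < τ → τ⁻¹ ≤ M → |(β v - w) / τ| ≤ M * (|β 0| + Lβ * |v| + |w|) := by
      intro τ hτ hτM
      rw [abs_div, abs_of_pos hτ, div_eq_mul_inv]
      calc |β v - w| * τ⁻¹ ≤ (|β 0| + Lβ * |v| + |w|) * M := by
            apply mul_le_mul ht hτM (inv_nonneg.mpr hτ.le) htn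
        _ = M * (|β 0| + Lβ * |v| + |w|) := mul_comm _ _
    calc |epF τep τres β v w| ≤ max |(β v - w) / τep| |(β v - w) / τres| :=
          abs_max_le_max_abs_abs
      _ ≤ M * (|β 0| + Lβ * |v| + |w|) :=
          max_le (hd τep hep (le_max_left _ _)) (hd τres hres (le_max_right _ _))
  -- integrability helpers
  have hmul2 : ∀ (f g : Γ → ℝ), MemLp f 2 μ → MemLp g 2 μ →
      Integrable (fun x => f x * g x) μ := by
    intro f g hf hg
    exact memLp_one_iff_integrable.mp
      (MemLp.smul hg hf (r := 1) (hpqr := ⟨by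
        rw [← two_mul, ENNReal.mul_inv_cancel (by norm_num) (by norm_num), inv_one]⟩))
  have hmul4 : ∀ (f g : Γ → ℝ), MemLp f 4 μ → MemLp g 4 μ →
      MemLp (fun x => f x * g x) 2 μ := by
    intro f g hf hg
    exact MemLp.smul hg hf (r := 2) (hpqr := ⟨by
      rw [← two_mul, show (4:ℝ≥0∞) = 2 * 2 by norm_num,
        ENNReal.mul_inv (by norm_num) (by norm_num), ← mul_assoc,
        ENNReal.mul_inv_cancel (by norm_num) (by norm_num), one_mul]⟩)
  have habs : ∀ (f : Γ → ℝ) (p : ℝ≥0∞), MemLp f p μ → MemLp (fun x => |f x|) p μ := by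
    intro f p hf
    simpa [Real.norm_eq_abs] using hf.norm
  rw [continuous_iff_continuousAt]
  intro s₀
  set R : ℝ := |s₀| + 1 with hRdef
  have hR0 : 0 ≤ R := by positivity
  have hsR : ∀ᶠ s in nhds s₀, |s| ≤ R := by
    have h : Filter.Tendsto (fun s : ℝ => |s|) (nhds s₀) (nhds |s₀|) :=
      continuous_abs.continuousAt
    exact (h.eventually_lt_const (by linarith : |s₀| < R)).mono fun s hs => hs.le
  -- the dominating functions
  have hK : MemLp (fun x => |u₁ x| + R * |u₂ x|) 4 μ :=
    (habs u₁ 4 hu₁).add ((habs u₂ 4 hu₂).const_mul R)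
  have hW : MemLp (fun x => |w₁ x| + R * |w₂ x|) 2 μ :=
    (habs w₁ 2 hw₁).add ((habs w₂ 2 hw₂).const_mul R)
  have hG : MemLp (fun x => S₀ + S₁ * (|w₁ x| + R * |w₂ x|)) 2 μ :=
    (memLp_const S₀).add (hW.const_mul S₁)
  have hKφ : MemLp (fun x => (|u₁ x| + R * |u₂ x|) * |φ x|) 2 μ :=
    hmul4 _ _ hK (habs φ 4 hφ)
  have hP : MemLp (fun x => |β 0| + Lβ * (|u₁ x| + R * |u₂ x|) + (|w₁ x| + R * |w₂ x|)) 2 μ :=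
    ((memLp_const |β 0|).add ((hK.mono_exponent (by norm_num)).const_mul Lβ)).add hW
  -- continuity of the first integral
  have hc1 : ContinuousAt (fun s : ℝ =>
      ∫ x, (S₀ + S₁ * (w₁ x + s * w₂ x)) * (u₁ x + s * u₂ x) * φ x ∂μ) s₀ := by
    apply continuousAt_of_dominated (bound := fun x =>
      (S₀ + S₁ * (|w₁ x| + R * |w₂ x|)) * ((|u₁ x| + R * |u₂ x|) * |φ x|))
    · refine Filter.Eventually.of_forall fun s => ?_
      exact ((aestronglyMeasurable_const.add
        ((hw₁.1.add (hw₂.1.const_mul s)).const_mul S₁)).mul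
        (hu₁.1.add (hu₂.1.const_mul s))).mul hφ.1
    · filter_upwards [hsR] with s hs
      refine Filter.Eventually.of_forall fun x => ?_
      rw [Real.norm_eq_abs]
      have e1 : |w₁ x + s * w₂ x| ≤ |w₁ x| + R * |w₂ x| := by
        have h := abs_add_le (w₁ x) (s * w₂ x)
        rw [abs_mul] at h
        nlinarith [abs_nonneg (w₂ x)]
      have e2 : |u₁ x + s * u₂ x| ≤ |u₁ x| + R * |u₂ x| := by
        have h := abs_add_le (u₁ x) (s * u₂ x)
        rw [abs_mul] at h
        nlinarith [abs_nonneg (u₂ x)]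
      have e3 : |S₀ + S₁ * (w₁ x + s * w₂ x)| ≤ S₀ + S₁ * (|w₁ x| + R * |w₂ x|) := by
        have h := abs_add_le S₀ (S₁ * (w₁ x + s * w₂ x))
        rw [abs_mul, abs_of_pos hS₀, abs_of_pos hS₁] at h
        nlinarith [abs_nonneg (w₁ x + s * w₂ x)]
      calc |(S₀ + S₁ * (w₁ x + s * w₂ x)) * (u₁ x + s * u₂ x) * φ x|
          = |S₀ + S₁ * (w₁ x + s * w₂ x)| * |u₁ x + s * u₂ x| * |φ x| := by
            rw [abs_mul, abs_mul]
        _ ≤ (S₀ + S₁ * (|w₁ x| + R * |w₂ x|)) * (|u₁ x| + R * |u₂ x|) * |φ x| := by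
            apply mul_le_mul_of_nonneg_right _ (abs_nonneg _)
            apply mul_le_mul e3 e2 (abs_nonneg _)
            positivity
        _ = (S₀ + S₁ * (|w₁ x| + R * |w₂ x|)) * ((|u₁ x| + R * |u₂ x|) * |φ x|) := by
            ring
    · exact hmul2 _ _ hG hKφ
    · refine Filter.Eventually.of_forall fun x => ?_
      exact Continuous.continuousAt (by continuity)
  -- continuity of the second integral
  have hc2 : ContinuousAt (fun s : ℝ =>
      ∫ x, epF τep τres β (u₁ x + s * u₂ x) (w₁ x + s * w₂ x) * ψ x ∂μ) s₀ := by
    apply continuousAt_of_dominated (bound := fun x =>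
      M * ((|β 0| + Lβ * (|u₁ x| + R * |u₂ x|) + (|w₁ x| + R * |w₂ x|)) * |ψ x|))
    · refine Filter.Eventually.of_forall fun s => ?_
      refine AEStronglyMeasurable.mul ?_ hψ.1
      exact hepc.comp_aestronglyMeasurable
        ((hu₁.1.add (hu₂.1.const_mul s)).prodMk (hw₁.1.add (hw₂.1.const_mul s)))
    · filter_upwards [hsR] with s hs
      refine Filter.Eventually.of_forall fun x => ?_
      rw [Real.norm_eq_abs, abs_mul]
      have e1 : |w₁ x + s * w₂ x| ≤ |w₁ x| + R * |w₂ x| := by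
        have h := abs_add_le (w₁ x) (s * w₂ x)
        rw [abs_mul] at h
        nlinarith [abs_nonneg (w₂ x)]
      have e2 : |u₁ x + s * u₂ x| ≤ |u₁ x| + R * |u₂ x| := by
        have h := abs_add_le (u₁ x) (s * u₂ x)
        rw [abs_mul] at h
        nlinarith [abs_nonneg (u₂ x)]
      have hb := hepF_bound (u₁ x + s * u₂ x) (w₁ x + s * w₂ x)
      have hmono : M * (|β 0| + Lβ * |u₁ x + s * u₂ x| + |w₁ x + s * w₂ x|)
          ≤ M * (|β 0| + Lβ * (|u₁ x| + R * |u₂ x|) + (|w₁ x| + R * |w₂ x|)) := by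
        apply mul_le_mul_of_nonneg_left _ hM0
        have := mul_le_mul_of_nonneg_left e2 hLβ
        linarith
      calc |epF τep τres β (u₁ x + s * u₂ x) (w₁ x + s * w₂ x)| * |ψ x|
          ≤ M * (|β 0| + Lβ * (|u₁ x| + R * |u₂ x|) + (|w₁ x| + R * |w₂ x|)) * |ψ x| :=
            mul_le_mul_of_nonneg_right (hb.trans hmono) (abs_nonneg _)
        _ = M * ((|β 0| + Lβ * (|u₁ x| + R * |u₂ x|) + (|w₁ x| + R * |w₂ x|)) * |ψ x|) := by
            ring
    · exact (hmul2 _ _ hP (habs ψ 2 hψ)).const_mul M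
    · refine Filter.Eventually.of_forall fun x => ?_
      refine Continuous.continuousAt ?_
      refine Continuous.mul ?_ continuous_const
      exact hepc.comp ((continuous_const.add (continuous_id.mul continuous_const)).prodMk
        (continuous_const.add (continuous_id.mul continuous_const)))
  exact (hc1.const_mul _).add hc2
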